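/- Let G be a bridgeless cubic graph containing a spanning subgraph that is a subdivision of a Kotzig graph. Then G has a 6-even-subgraph double cover. -/

import Mathlib

namespace CDC

open SimpleGraph

/-- Number of edges in the edge set `S` incident with `v`. -/
noncomputable def esdeg {V : Type} (S : Set (Sym2 V)) (v : V) : ℕ :=
  {e ∈ S | v ∈ e}.ncard

/-- Degree of `v` in the graph `G` (as a set cardinality, no instances needed). -/
noncomputable def ndeg {V : Type} (G : SimpleGraph V) (v : V) : ℕ :=
  (G.neighborSet v).ncard

def IsCubic {V : Type} (G : SimpleGraph V) : Prop := ∀ v, ndeg G v = 3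

/-- A proper edge coloring: distinct edges sharing a vertex get distinct colors. -/
def ProperEdgeColoring {V : Type} (G : SimpleGraph V) (c : Sym2 V → ZMod 3) : Prop :=
  ∀ e₁ ∈ G.edgeSet, ∀ e₂ ∈ G.edgeSet, e₁ ≠ e₂ → (∃ v, v ∈ e₁ ∧ v ∈ e₂) → c e₁ ≠ c e₂

/-- The spanning subgraph of `G` formed by the edges whose color lies in `A`. -/
def classGraph {V : Type} (G : SimpleGraph V) (c : Sym2 V → ZMod 3) (A : Set (ZMod 3)) :
    SimpleGraph V :=
  SimpleGraph.fromEdgeSet {e ∈ G.edgeSet | c e ∈ A}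

/-- A Hamiltonian circuit (as a spanning subgraph): connected and 2-regular. -/
def IsHamCircuit {V : Type} (G : SimpleGraph V) : Prop :=
  G.Connected ∧ ∀ v, ndeg G v = 2

/-- A Kotzig graph: cubic with a proper 3-edge-coloring where each pair of
color classes forms a Hamiltonian circuit. -/
def IsKotzig {V : Type} (G : SimpleGraph V) (c : Sym2 V → ZMod 3) : Prop :=
  IsCubic G ∧ ProperEdgeColoring G c ∧
    ∀ α β : ZMod 3, α ≠ β → IsHamCircuit (classGraph G c {α, β})

/-- Swap colors 1 and 2. -/
def swapColor : ZMod 3 → ZMod 3 := fun x => if x = 1 then 2 else if x = 2 then 1 else x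

open Classical in
/-- Switch colors 1 and 2 on the edges of `S`. -/
noncomputable def switch {V : Type} (c : Sym2 V → ZMod 3) (S : Set (Sym2 V)) :
    Sym2 V → ZMod 3 :=
  fun e => if e ∈ S then swapColor (c e) else c e

/-- Property (*): proper coloring where colors {0,1} and {0,2} induce Hamiltonian circuits. -/
def HasStar {V : Type} (G : SimpleGraph V) (c : Sym2 V → ZMod 3) : Prop :=
  ProperEdgeColoring G c ∧ IsHamCircuit (classGraph G c {0, 1}) ∧
    IsHamCircuit (classGraph G c {0, 2})

/-- The edge set of the 2-factor induced by colors 1 and 2. -/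
def Fedges {V : Type} (G : SimpleGraph V) (c : Sym2 V → ZMod 3) : Set (Sym2 V) :=
  {e ∈ G.edgeSet | c e = 1 ∨ c e = 2}

/-- An even edge set: every vertex meets an even number of its edges. -/
def IsEvenEdgeSet {V : Type} (S : Set (Sym2 V)) : Prop := ∀ v, Even (esdeg S v)

/-- A semi-Kotzig graph: cubic, property (*) holds and is preserved by switching
colors 1 and 2 on any even subgraph of the 2-factor induced by colors 1 and 2. -/
def IsSemiKotzig {V : Type} (G : SimpleGraph V) (c : Sym2 V → ZMod 3) : Prop :=
  IsCubic G ∧ HasStar G c ∧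
    ∀ S ⊆ Fedges G c, IsEvenEdgeSet S → HasStar G (switch c S)

/-- An even subgraph of `G`, given by its edge set. -/
def IsEvenSubgraphOf {V : Type} (G : SimpleGraph V) (S : Set (Sym2 V)) : Prop :=
  S ⊆ G.edgeSet ∧ IsEvenEdgeSet S

/-- A 6-even-subgraph double cover. -/
def HasSixDoubleCover {V : Type} (G : SimpleGraph V) : Prop :=
  ∃ D : Fin 6 → Set (Sym2 V), (∀ i, IsEvenSubgraphOf G (D i)) ∧
    ∀ e ∈ G.edgeSet, {i | e ∈ D i}.ncard = 2

def Bridgeless {V : Type} (G : SimpleGraph V) : Prop := ∀ e, ¬ G.IsBridge e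

end CDC


namespace CDC
open SimpleGraph

/-- Subdivide the edge `s(u,v)` of `G`, introducing the new vertex `none`. -/
def subdivideEdge {α : Type} (G : SimpleGraph α) (u v : α) : SimpleGraph (Option α) :=
  SimpleGraph.fromEdgeSet
    ({e | ∃ a b, G.Adj a b ∧ s(a, b) ≠ s(u, v) ∧ e = s(some a, some b)} ∪
      {s(none, some u), s(none, some v)})

/-- `IsSubdivisionOf G K`: `G` is (isomorphic to) a graph obtained from `K`
by repeatedly subdividing edges. -/
inductive IsSubdivisionOf : {α : Type} → SimpleGraph α → {β : Type} → SimpleGraph β → Prop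
  | base {α β : Type} (G : SimpleGraph α) (K : SimpleGraph β) (f : G ≃g K) :
      IsSubdivisionOf G K
  | step {α β : Type} (G : SimpleGraph α) (K : SimpleGraph β) (u v : α) (h : G.Adj u v)
      (hGK : IsSubdivisionOf G K) : IsSubdivisionOf (subdivideEdge G u v) K
  | iso {α α' β : Type} (G : SimpleGraph α) (G' : SimpleGraph α') (K : SimpleGraph β)
      (f : G ≃g G') (hGK : IsSubdivisionOf G K) : IsSubdivisionOf G' K

/-- Extend an edge labelling of `G` to the graph obtained by subdividing the edge
`s(u,v)`: old edges keep their labels, both new half-edges inherit the label of `s(u,v)`. -/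
def extendLabel {α L : Type} (ℓ : Sym2 α → L) (u v : α) : Sym2 (Option α) → L :=
  Sym2.lift ⟨fun x y =>
    match x, y with
    | some a, some b => ℓ s(a, b)
    | _, _ => ℓ s(u, v),
    by rintro (a | a) (b | b) <;> simp only [] ; rw [Sym2.eq_swap]⟩

/-- Labelled subdivision: `G` with edge labelling `ℓG` is obtained from `K` with edge
labelling `ℓK` by repeatedly subdividing edges, subdivided edges inheriting labels. -/
inductive IsLabeledSubdivisionOf {L : Type} :
    {α : Type} → SimpleGraph α → (Sym2 α → L) → {β : Type} → SimpleGraph β → (Sym2 β → L) → Prop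
  | base {α β : Type} (G : SimpleGraph α) (ℓG : Sym2 α → L) (K : SimpleGraph β)
      (ℓK : Sym2 β → L) (f : G ≃g K) (hf : ∀ a b, G.Adj a b → ℓG s(a, b) = ℓK s(f a, f b)) :
      IsLabeledSubdivisionOf G ℓG K ℓK
  | step {α β : Type} (G : SimpleGraph α) (ℓG : Sym2 α → L) (K : SimpleGraph β)
      (ℓK : Sym2 β → L) (u v : α) (h : G.Adj u v) (hGK : IsLabeledSubdivisionOf G ℓG K ℓK) :
      IsLabeledSubdivisionOf (subdivideEdge G u v) (extendLabel ℓG u v) K ℓK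
  | iso {α α' β : Type} (G : SimpleGraph α) (G' : SimpleGraph α') (ℓG : Sym2 α → L)
      (ℓG' : Sym2 α' → L) (K : SimpleGraph β) (ℓK : Sym2 β → L) (f : G ≃g G')
      (hf : ∀ a b, G.Adj a b → ℓG s(a, b) = ℓG' s(f a, f b))
      (hGK : IsLabeledSubdivisionOf G ℓG K ℓK) : IsLabeledSubdivisionOf G' ℓG' K ℓK

end CDC
namespace CDC
open SimpleGraph Set

variable {V : Type}

lemma esdeg_def (S : Set (Sym2 V)) (v : V) : esdeg S v = {e ∈ S | v ∈ e}.ncard := rfl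

lemma edgesAt_eq_image (G : SimpleGraph V) (v : V) :
    {e ∈ G.edgeSet | v ∈ e} = (fun w => s(v, w)) '' (G.neighborSet v) := by
  ext e
  constructor
  · rintro ⟨he, hv⟩
    induction e with
    | h x y =>
      rcases Sym2.mem_iff.mp hv with rfl | rfl
      · exact ⟨y, he, rfl⟩
      · exact ⟨x, G.adj_symm he, Sym2.eq_swap⟩
  · rintro ⟨w, hw, rfl⟩
    exact ⟨hw, Sym2.mem_mk_left v w⟩

lemma esdeg_edgeSet (G : SimpleGraph V) (v : V) : esdeg G.edgeSet v = ndeg G v := by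
  rw [esdeg_def, edgesAt_eq_image, ndeg]
  exact Set.ncard_image_of_injective _ (fun a b hab => (Sym2.congr_right).mp hab)

lemma classGraph_adj (G : SimpleGraph V) (c : Sym2 V → ZMod 3) (A : Set (ZMod 3)) (x y : V) :
    (classGraph G c A).Adj x y ↔ G.Adj x y ∧ c s(x, y) ∈ A := by
  simp only [classGraph, fromEdgeSet_adj, Set.mem_setOf_eq, mem_edgeSet]
  constructor
  · rintro ⟨⟨h1, h2⟩, _⟩; exact ⟨h1, h2⟩
  · rintro ⟨h1, h2⟩; exact ⟨⟨h1, h2⟩, h1.ne⟩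

lemma classGraph_edgeSet (G : SimpleGraph V) (c : Sym2 V → ZMod 3) (A : Set (ZMod 3)) :
    (classGraph G c A).edgeSet = {e ∈ G.edgeSet | c e ∈ A} := by
  rw [classGraph, edgeSet_fromEdgeSet]
  ext e
  simp only [Set.mem_diff, Set.mem_setOf_eq]
  exact ⟨fun h => h.1, fun h => ⟨h, fun hd => (SimpleGraph.not_isDiag_of_mem_edgeSet G h.1) hd⟩⟩

end CDC
namespace CDC
open SimpleGraph Set

variable {V α : Type}

lemma subdivideEdge_edgeSet (G : SimpleGraph α) (u v : α) :
    (subdivideEdge G u v).edgeSet =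
      {e | ∃ a b, G.Adj a b ∧ s(a, b) ≠ s(u, v) ∧ e = s(some a, some b)} ∪
        {s(none, some u), s(none, some v)} := by
  rw [subdivideEdge, edgeSet_fromEdgeSet]
  rw [sdiff_eq_self_iff_disjoint, Set.disjoint_left]
  rintro e hd he
  rcases he with ⟨a, b, hab, -, rfl⟩ | (rfl | rfl) <;> simp_all [Sym2.isDiag_iff_proj_eq]

lemma subdivideEdge_adj_some (G : SimpleGraph α) (u v a b : α) :
    (subdivideEdge G u v).Adj (some a) (some b) ↔ G.Adj a b ∧ s(a, b) ≠ s(u, v) := by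
  rw [← mem_edgeSet, subdivideEdge_edgeSet]
  constructor
  · rintro (⟨a', b', hab, hne, he⟩ | (he | he))
    · rw [Sym2.eq_iff] at he
      rcases he with ⟨h1, h2⟩ | ⟨h1, h2⟩ <;>
        rw [Option.some_inj] at h1 h2 <;> subst h1 <;> subst h2
      · exact ⟨hab, hne⟩
      · exact ⟨hab.symm, by rwa [Sym2.eq_swap]⟩
    · simp [Sym2.eq_iff] at he
    · simp [Sym2.eq_iff] at he
  · rintro ⟨hab, hne⟩
    exact Or.inl ⟨a, b, hab, hne, rfl⟩

lemma subdivideEdge_adj_none (G : SimpleGraph α) (u v : α) (huv : u ≠ v) (w : α) :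
    (subdivideEdge G u v).Adj none (some w) ↔ w = u ∨ w = v := by
  rw [← mem_edgeSet, subdivideEdge_edgeSet]
  constructor
  · rintro (⟨a', b', hab, hne, he⟩ | (he | he))
    · simp [Sym2.eq_iff] at he
    · simp_all [Sym2.eq_iff]
    · simp_all [Sym2.eq_iff]
  · rintro (rfl | rfl)
    · exact Or.inr (Or.inl rfl)
    · exact Or.inr (Or.inr rfl)

lemma subdivideEdge_not_adj_none (G : SimpleGraph α) (u v : α) :
    ¬ (subdivideEdge G u v).Adj none none := fun h => h.ne rfl

lemma extendLabel_some {L : Type} (ℓ : Sym2 α → L) (u v a b : α) :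
    extendLabel ℓ u v s(some a, some b) = ℓ s(a, b) := rfl

lemma extendLabel_none {L : Type} (ℓ : Sym2 α → L) (u v w : α) :
    extendLabel ℓ u v s(none, some w) = ℓ s(u, v) := rfl

end CDC
namespace CDC
open SimpleGraph Set

variable {α α' : Type}

/-- The invariant carried through the subdivision induction. -/
structure GC {α : Type} (H : SimpleGraph α) (c : Sym2 α → ZMod 3) : Prop where
  deg23 : ∀ v, esdeg H.edgeSet v = 2 ∨ esdeg H.edgeSet v = 3
  mono2 : ∀ v, esdeg H.edgeSet v = 2 →
    ∀ e ∈ H.edgeSet, ∀ f ∈ H.edgeSet, v ∈ e → v ∈ f → c e = c f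
  tri3 : ∀ v, esdeg H.edgeSet v = 3 →
    ∀ e ∈ H.edgeSet, ∀ f ∈ H.edgeSet, v ∈ e → v ∈ f → e ≠ f → c e ≠ c f
  conn : ∀ γ u w, (∃ e ∈ (classGraph H c {x | x ≠ γ}).edgeSet, u ∈ e) →
    (∃ e ∈ (classGraph H c {x | x ≠ γ}).edgeSet, w ∈ e) →
    (classGraph H c {x | x ≠ γ}).Reachable u w

lemma iso_EA {H : SimpleGraph α} {H' : SimpleGraph α'} (f : H ≃g H') (a : α) :
    {e ∈ H'.edgeSet | f a ∈ e} = Sym2.map f '' {e ∈ H.edgeSet | a ∈ e} := by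
  ext e'
  constructor
  · rintro ⟨he, ha⟩
    refine ⟨Sym2.map f.symm e', ⟨?_, ?_⟩, ?_⟩
    · rw [← SimpleGraph.Iso.map_mem_edgeSet_iff f]
      rwa [Sym2.map_map, show (⇑f ∘ ⇑f.symm) = id by ext x; simp, Sym2.map_id, id]
    · rw [Sym2.mem_map]
      exact ⟨f a, ha, f.symm_apply_apply a⟩
    · rw [Sym2.map_map, show (⇑f ∘ ⇑f.symm) = id by ext x; simp, Sym2.map_id, id]
  · rintro ⟨e, ⟨he, ha⟩, rfl⟩
    refine ⟨(SimpleGraph.Iso.map_mem_edgeSet_iff f).mpr he, ?_⟩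
    rw [Sym2.mem_map]
    exact ⟨a, ha, rfl⟩

lemma iso_esdeg {H : SimpleGraph α} {H' : SimpleGraph α'} (f : H ≃g H') (a : α) :
    esdeg H'.edgeSet (f a) = esdeg H.edgeSet a := by
  rw [esdeg_def, esdeg_def, iso_EA f a,
    Set.ncard_image_of_injective _ (Sym2.map.injective f.injective)]

/-- The class graphs of isomorphic labelled graphs are isomorphic. -/
def classIso {H : SimpleGraph α} {H' : SimpleGraph α'} (f : H ≃g H') (c : Sym2 α → ZMod 3)
    (A : Set (ZMod 3)) :
    classGraph H c A ≃g classGraph H' (fun e => c (Sym2.map f.symm e)) A where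
  toEquiv := f.toEquiv
  map_rel_iff' := by
    intro x y
    rw [classGraph_adj, classGraph_adj]
    have h1 : Sym2.map f.symm s(f.toEquiv x, f.toEquiv y) = s(x, y) := by
      simp [Sym2.map_pair_eq]
    rw [h1]
    exact and_congr f.map_adj_iff Iff.rfl

lemma iso_mem_back {H : SimpleGraph α} {H' : SimpleGraph α'} (f : H ≃g H') (a : α)
    (e' : Sym2 α') (he' : e' ∈ H'.edgeSet) (hae' : f a ∈ e') :
    Sym2.map f.symm e' ∈ H.edgeSet ∧ a ∈ Sym2.map f.symm e' := by
  constructor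
  · exact (SimpleGraph.Iso.map_mem_edgeSet_iff f.symm).mpr he'
  · rw [Sym2.mem_map]; exact ⟨f a, hae', f.symm_apply_apply a⟩

lemma GC_iso {H : SimpleGraph α} {H' : SimpleGraph α'} {c : Sym2 α → ZMod 3} (f : H ≃g H')
    (h : GC H c) : GC H' (fun e => c (Sym2.map f.symm e)) := by
  have hsur : ∀ v : α', ∃ a, f a = v := fun v => ⟨f.symm v, f.apply_symm_apply v⟩
  constructor
  · intro v; obtain ⟨a, rfl⟩ := hsur v
    rw [iso_esdeg f a]; exact h.deg23 a
  · intro v hv e he fe hfe hvee hvfe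
    obtain ⟨a, rfl⟩ := hsur v
    rw [iso_esdeg f a] at hv
    obtain ⟨hm1, hm2⟩ := iso_mem_back f a e he hvee
    obtain ⟨hm3, hm4⟩ := iso_mem_back f a fe hfe hvfe
    exact h.mono2 a hv _ hm1 _ hm3 hm2 hm4
  · intro v hv e he fe hfe hvee hvfe hne
    obtain ⟨a, rfl⟩ := hsur v
    rw [iso_esdeg f a] at hv
    obtain ⟨hm1, hm2⟩ := iso_mem_back f a e he hvee
    obtain ⟨hm3, hm4⟩ := iso_mem_back f a fe hfe hvfe
    refine h.tri3 a hv _ hm1 _ hm3 hm2 hm4 ?_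
    intro hcon
    exact hne (by
      have := congrArg (Sym2.map f) hcon
      rwa [Sym2.map_map, Sym2.map_map, show (⇑f ∘ ⇑f.symm) = id by ext x; simp,
        Sym2.map_id, id, id] at this)
  · intro γ u w hu hw
    obtain ⟨a, rfl⟩ := hsur u
    obtain ⟨b, rfl⟩ := hsur w
    have hback : ∀ x : α, (∃ e ∈ (classGraph H' (fun e => c (Sym2.map f.symm e)) {x | x ≠ γ}).edgeSet, f x ∈ e) →
        ∃ e ∈ (classGraph H c {x | x ≠ γ}).edgeSet, x ∈ e := by
      intro x ⟨e, he, hxe⟩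
      rw [classGraph_edgeSet] at he
      obtain ⟨hm1, hm2⟩ := iso_mem_back f x e he.1 hxe
      exact ⟨Sym2.map f.symm e, by rw [classGraph_edgeSet]; exact ⟨hm1, he.2⟩, hm2⟩
    have hr := h.conn γ a b (hback a hu) (hback b hw)
    have := hr.map (classIso f c {x | x ≠ γ}).toHom
    exact this

end CDC
namespace CDC
open SimpleGraph Set

variable {α : Type}

lemma zmod3_pair (γ : ZMod 3) : {x : ZMod 3 | x ≠ γ} = {γ + 1, γ + 2} := by
  have h : ∀ γ x : ZMod 3, x ≠ γ ↔ (x = γ + 1 ∨ x = γ + 2) := by decide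
  ext x
  simp only [Set.mem_setOf_eq, Set.mem_insert_iff, Set.mem_singleton_iff]
  exact h γ x

lemma kotzig_GC {K : SimpleGraph α} {cK : Sym2 α → ZMod 3} (hK : IsKotzig K cK) : GC K cK := by
  obtain ⟨hcub, hprop, hham⟩ := hK
  have hdeg : ∀ v, esdeg K.edgeSet v = 3 := fun v => by rw [esdeg_edgeSet]; exact hcub v
  constructor
  · exact fun v => Or.inr (hdeg v)
  · intro v hv
    rw [hdeg v] at hv; omega
  · intro v _ e he f hf hve hvf hne
    exact hprop e he f hf hne ⟨v, hve, hvf⟩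
  · intro γ u w _ _
    have hne : ∀ γ : ZMod 3, γ + 1 ≠ γ + 2 := by decide
    have := (hham (γ + 1) (γ + 2) (hne γ)).1
    rw [zmod3_pair γ]
    exact this.preconnected u w

variable {α : Type}

lemma EA_subdivide_none (H : SimpleGraph α) (u v : α) (huv : H.Adj u v) :
    {e ∈ (subdivideEdge H u v).edgeSet | (none : Option α) ∈ e} =
      {s(none, some u), s(none, some v)} := by
  ext e
  constructor
  · rintro ⟨he, hn⟩
    rw [subdivideEdge_edgeSet] at he
    rcases he with ⟨a, b, hab, hne, rfl⟩ | (rfl | rfl)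
    · rw [Sym2.mem_iff] at hn
      rcases hn with h | h <;> exact absurd h (by simp)
    · exact Or.inl rfl
    · exact Or.inr rfl
  · rintro (rfl | rfl) <;>
      refine ⟨by rw [subdivideEdge_edgeSet]; exact Or.inr (by simp), by simp⟩

lemma esdeg_subdivide_none (H : SimpleGraph α) (u v : α) (huv : H.Adj u v) :
    esdeg (subdivideEdge H u v).edgeSet none = 2 := by
  rw [esdeg_def, EA_subdivide_none H u v huv, Set.ncard_pair]
  simp [Sym2.eq_iff, huv.ne]

open scoped Classical

/-- The incidence-preserving map from edges at `a` to edges at `some a`. -/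
noncomputable def subMap (u v : α) (a : α) : Sym2 α → Sym2 (Option α) :=
  fun e => if e = s(u, v) then s(none, some a) else Sym2.map some e

lemma subMap_eq (u v a : α) (e : Sym2 α) :
    subMap u v a e = if e = s(u, v) then s(none, some a) else Sym2.map some e := rfl

lemma EA_subdivide_some (H : SimpleGraph α) (u v : α) (huv : H.Adj u v) (a : α) :
    {e ∈ (subdivideEdge H u v).edgeSet | (some a : Option α) ∈ e} =
      subMap u v a '' {e ∈ H.edgeSet | a ∈ e} := by
  ext e'
  constructor
  · rintro ⟨he, ha⟩
    rw [subdivideEdge_edgeSet] at he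
    rcases he with ⟨x, y, hxy, hne, rfl⟩ | (rfl | rfl)
    · rw [Sym2.mem_iff] at ha
      have hax : a ∈ s(x, y) := by
        rw [Sym2.mem_iff]
        rcases ha with h | h <;> rw [Option.some_inj] at h <;> [left; right] <;> exact h
      refine ⟨s(x, y), ⟨hxy, hax⟩, ?_⟩
      rw [subMap_eq, if_neg hne, Sym2.map_pair_eq]
    · rw [Sym2.mem_iff] at ha
      rcases ha with h | h
      · exact absurd h (by simp)
      · rw [Option.some_inj] at h; subst h
        exact ⟨s(a, v), ⟨huv, by simp⟩, by rw [subMap_eq, if_pos rfl]⟩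
    · rw [Sym2.mem_iff] at ha
      rcases ha with h | h
      · exact absurd h (by simp)
      · rw [Option.some_inj] at h; subst h
        refine ⟨s(u, a), ⟨huv, by simp⟩, ?_⟩
        rw [subMap_eq]
        rw [if_pos (by rw [Sym2.eq_iff]; tauto)]
  · rintro ⟨e, ⟨he, hae⟩, rfl⟩
    rw [subMap_eq]
    by_cases h : e = s(u, v)
    · subst h
      rw [if_pos rfl]
      rw [Sym2.mem_iff] at hae
      constructor
      · rw [subdivideEdge_edgeSet]
        rcases hae with rfl | rfl
        · exact Or.inr (Or.inl rfl)
        · exact Or.inr (Or.inr (by rw [Set.mem_singleton_iff, Sym2.eq_iff]; tauto))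
      · simp
    · rw [if_neg h]
      induction e with
      | h x y =>
        constructor
        · rw [subdivideEdge_edgeSet, Sym2.map_pair_eq]
          exact Or.inl ⟨x, y, he, h, rfl⟩
        · rw [Sym2.map_pair_eq, Sym2.mem_iff] at *
          rcases hae with rfl | rfl <;> simp

lemma subMap_injOn (u v a : α) : Set.InjOn (subMap u v a) {e | a ∈ e} := by
  intro e1 h1 e2 h2 heq
  rw [subMap_eq, subMap_eq] at heq
  by_cases k1 : e1 = s(u, v) <;> by_cases k2 : e2 = s(u, v)
  · rw [k1, k2]
  · rw [if_pos k1, if_neg k2] at heq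
    exfalso
    have : (none : Option α) ∈ Sym2.map some e2 := by rw [← heq]; simp
    rw [Sym2.mem_map] at this
    obtain ⟨x, -, hx⟩ := this
    exact Option.some_ne_none x hx
  · rw [if_neg k1, if_pos k2] at heq
    exfalso
    have : (none : Option α) ∈ Sym2.map some e1 := by rw [heq]; simp
    rw [Sym2.mem_map] at this
    obtain ⟨x, -, hx⟩ := this
    exact Option.some_ne_none x hx
  · rw [if_neg k1, if_neg k2] at heq
    exact Sym2.map.injective (Option.some_injective α) heq

lemma esdeg_subdivide_some (H : SimpleGraph α) (u v : α) (huv : H.Adj u v) (a : α) :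
    esdeg (subdivideEdge H u v).edgeSet (some a) = esdeg H.edgeSet a := by
  rw [esdeg_def, esdeg_def, EA_subdivide_some H u v huv a]
  exact Set.ncard_image_of_injOn (Set.InjOn.mono (fun e he => he.2) (subMap_injOn u v a))

lemma subMap_label (c : Sym2 α → ZMod 3) (u v a : α) (e : Sym2 α) :
    extendLabel c u v (subMap u v a e) = c e := by
  rw [subMap_eq]
  by_cases h : e = s(u, v)
  · rw [if_pos h, extendLabel_none, h]
  · rw [if_neg h]
    induction e with
    | h x y => rw [Sym2.map_pair_eq, extendLabel_some]

lemma classGraph_subdivide_adj_some (H : SimpleGraph α) (c : Sym2 α → ZMod 3) (u v : α)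
    (A : Set (ZMod 3)) (a b : α) :
    (classGraph (subdivideEdge H u v) (extendLabel c u v) A).Adj (some a) (some b) ↔
      H.Adj a b ∧ s(a, b) ≠ s(u, v) ∧ c s(a, b) ∈ A := by
  rw [classGraph_adj, subdivideEdge_adj_some, extendLabel_some]
  tauto

lemma classGraph_subdivide_adj_none (H : SimpleGraph α) (c : Sym2 α → ZMod 3) (u v : α)
    (huv : u ≠ v) (A : Set (ZMod 3)) (w : α) :
    (classGraph (subdivideEdge H u v) (extendLabel c u v) A).Adj none (some w) ↔
      (w = u ∨ w = v) ∧ c s(u, v) ∈ A := by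
  rw [classGraph_adj, subdivideEdge_adj_none _ _ _ huv, extendLabel_none]

lemma subdivide_lift_reachable (H : SimpleGraph α) (c : Sym2 α → ZMod 3) (u v : α)
    (huv : H.Adj u v) (A : Set (ZMod 3)) (a b : α)
    (h : (classGraph H c A).Reachable a b) :
    (classGraph (subdivideEdge H u v) (extendLabel c u v) A).Reachable (some a) (some b) := by
  obtain ⟨p⟩ := h
  induction p with
  | nil => exact Reachable.refl _
  | @cons x y z hxy p ih =>
    refine Reachable.trans ?_ ih
    rw [classGraph_adj] at hxy
    obtain ⟨hadj, hcol⟩ := hxy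
    by_cases hne : s(x, y) = s(u, v)
    · have hcuv : c s(u, v) ∈ A := hne ▸ hcol
      rw [Sym2.eq_iff] at hne
      have h1 : (classGraph (subdivideEdge H u v) (extendLabel c u v) A).Adj (some x) none := by
        rw [adj_comm, classGraph_subdivide_adj_none H c u v huv.ne]
        exact ⟨by tauto, hcuv⟩
      have h2 : (classGraph (subdivideEdge H u v) (extendLabel c u v) A).Adj none (some y) := by
        rw [classGraph_subdivide_adj_none H c u v huv.ne]
        exact ⟨by tauto, hcuv⟩
      exact Reachable.trans h1.reachable h2.reachable
    · exact Adj.reachable (by rw [classGraph_subdivide_adj_some]; exact ⟨hadj, hne, hcol⟩)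

lemma GC_subdivide {H : SimpleGraph α} {c : Sym2 α → ZMod 3} {u v : α} (huv : H.Adj u v)
    (h : GC H c) : GC (subdivideEdge H u v) (extendLabel c u v) := by
  have hEA := EA_subdivide_some H u v huv
  -- surjectivity data: every new edge at `some a` comes from an old edge at `a`
  have hback : ∀ a : α, ∀ e' ∈ (subdivideEdge H u v).edgeSet, (some a : Option α) ∈ e' →
      ∃ e ∈ H.edgeSet, a ∈ e ∧ subMap u v a e = e' ∧ extendLabel c u v e' = c e := by
    intro a e' he' hae'
    have : e' ∈ subMap u v a '' {e ∈ H.edgeSet | a ∈ e} := by rw [← hEA a]; exact ⟨he', hae'⟩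
    obtain ⟨e, ⟨he, hae⟩, rfl⟩ := this
    exact ⟨e, he, hae, rfl, subMap_label c u v a e⟩
  constructor
  · rintro (_ | a)
    · exact Or.inl (esdeg_subdivide_none H u v huv)
    · rw [esdeg_subdivide_some H u v huv]; exact h.deg23 a
  · rintro (_ | a) hdeg e' he' f' hf' hve hvf
    · -- at `none`: both edges are the two half-edges, labelled `c s(u,v)`
      have h1 : e' ∈ ({s(none, some u), s(none, some v)} : Set (Sym2 (Option α))) := by
        rw [← EA_subdivide_none H u v huv]; exact ⟨he', hve⟩
      have h2 : f' ∈ ({s(none, some u), s(none, some v)} : Set (Sym2 (Option α))) := by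
        rw [← EA_subdivide_none H u v huv]; exact ⟨hf', hvf⟩
      rcases h1 with rfl | rfl <;> rcases h2 with rfl | rfl <;>
        simp [extendLabel_none]
    · rw [esdeg_subdivide_some H u v huv] at hdeg
      obtain ⟨e, he, hae, -, hce⟩ := hback a e' he' hve
      obtain ⟨f, hf, haf, -, hcf⟩ := hback a f' hf' hvf
      rw [hce, hcf]
      exact h.mono2 a hdeg e he f hf hae haf
  · rintro (_ | a) hdeg e' he' f' hf' hve hvf hnef
    · rw [esdeg_subdivide_none H u v huv] at hdeg; omega
    · rw [esdeg_subdivide_some H u v huv] at hdeg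
      obtain ⟨e, he, hae, hme, hce⟩ := hback a e' he' hve
      obtain ⟨f, hf, haf, hmf, hcf⟩ := hback a f' hf' hvf
      rw [hce, hcf]
      refine h.tri3 a hdeg e he f hf hae haf ?_
      rintro rfl
      exact hnef (hme ▸ hmf ▸ rfl)
  · intro γ x y hx hy
    set C := classGraph H c {x | x ≠ γ} with hC
    set C' := classGraph (subdivideEdge H u v) (extendLabel c u v) {x | x ≠ γ} with hC'
    have hreduce : ∀ x, (∃ e ∈ C'.edgeSet, x ∈ e) →
        ∃ a, (∃ e ∈ C.edgeSet, a ∈ e) ∧ C'.Reachable x (some a) := by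
      rintro (_ | a) ⟨e', he', hxe'⟩
      · -- x = none
        rw [hC', classGraph_edgeSet] at he'
        have h1 : e' ∈ ({s(none, some u), s(none, some v)} : Set (Sym2 (Option α))) := by
          rw [← EA_subdivide_none H u v huv]; exact ⟨he'.1, hxe'⟩
        have hcuv : c s(u, v) ≠ γ := by
          rcases h1 with rfl | rfl <;> rw [← extendLabel_none c u v] <;> exact he'.2
        refine ⟨u, ⟨s(u, v), by rw [hC, classGraph_edgeSet]; exact ⟨huv, hcuv⟩, by simp⟩, ?_⟩
        refine Adj.reachable ?_
        rw [hC', classGraph_subdivide_adj_none H c u v huv.ne]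
        exact ⟨Or.inl rfl, hcuv⟩
      · -- x = some a
        rw [hC', classGraph_edgeSet] at he'
        obtain ⟨e, he, hae, -, hce⟩ := hback a e' he'.1 hxe'
        have hcc : c e ≠ γ := by rw [← hce]; exact he'.2
        exact ⟨a, ⟨e, by rw [hC, classGraph_edgeSet]; exact ⟨he, hcc⟩, hae⟩, Reachable.refl _⟩
    obtain ⟨a, ha, hra⟩ := hreduce x hx
    obtain ⟨b, hb, hrb⟩ := hreduce y hy
    have hab := h.conn γ a b ha hb
    exact hra.trans ((subdivide_lift_reachable H c u v huv _ a b hab).trans hrb.symm)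

lemma phase1 {β γ : Type} {B : SimpleGraph β} {K : SimpleGraph γ}
    (h : IsSubdivisionOf B K) : (∃ cK, GC K cK) → ∃ cB, GC B cB := by
  induction h with
  | base G K f =>
    rintro ⟨cK, hc⟩
    exact ⟨_, GC_iso f.symm hc⟩
  | step G K u v huv hGK ih =>
    intro hk
    obtain ⟨c, hc⟩ := ih hk
    exact ⟨_, GC_subdivide huv hc⟩
  | iso G G' K f hGK ih =>
    intro hk
    obtain ⟨c, hc⟩ := ih hk
    exact ⟨_, GC_iso f hc⟩

lemma walk_countP_parity {V : Type} (H : SimpleGraph V) {u w : V} (p : H.Walk u w) (v : V) :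
    (p.edges.countP (fun e => decide (v ∈ e))) % 2 =
      ((if v = u then 1 else 0) + (if v = w then 1 else 0)) % 2 := by
  induction p with
  | @nil a =>
    rw [SimpleGraph.Walk.edges_nil, List.countP_nil]
    by_cases h : v = a <;> simp [h]
  | @cons a b z hab q ih =>
    rw [SimpleGraph.Walk.edges_cons, List.countP_cons]
    have hmem : (if v ∈ s(a, b) then 1 else 0) =
        (if v = a then 1 else 0) + (if v = b then 1 else 0) := by
      by_cases h1 : v = a <;> by_cases h2 : v = b
      · exact absurd (h1.symm.trans h2) hab.ne
      · simp [h1, h2, Sym2.mem_iff, hab.ne, hab.ne']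
      · simp [h1, h2, Sym2.mem_iff, hab.ne, hab.ne']
      · simp [h1, h2, Sym2.mem_iff]
    simp only [decide_eq_true_eq] at *
    rw [hmem] at *
    omega

lemma pairlist_length {γ : Type} (l : List γ) (hnd : l.Nodup) (e f : γ) (hef : e ≠ f)
    (hsub : ∀ g ∈ l, g = e ∨ g = f) :
    l.length = (if e ∈ l then 1 else 0) + (if f ∈ l then 1 else 0) := by
  induction l with
  | nil => simp
  | cons a l' ih =>
    rw [List.nodup_cons] at hnd
    have hrec := ih hnd.2 (fun g hg => hsub g (List.mem_cons_of_mem a hg))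
    rcases hsub a (List.mem_cons_self) with rfl | rfl
    · have he : a ∈ a :: l' := List.mem_cons_self
      have hf : (f ∈ a :: l') ↔ (f ∈ l') := by
        rw [List.mem_cons]; exact or_iff_right (fun h => hef h.symm)
      rw [List.length_cons, hrec, if_pos he, if_neg hnd.1]
      by_cases h : f ∈ l'
      · rw [if_pos h, if_pos (hf.mpr h)]
      · rw [if_neg h, if_neg (fun hc => h (hf.mp hc))]
    · have he : a ∈ a :: l' := List.mem_cons_self
      have hf : (e ∈ a :: l') ↔ (e ∈ l') := by
        rw [List.mem_cons]; exact or_iff_right (fun h => hef h)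
      rw [List.length_cons, hrec, if_pos he, if_neg hnd.1]
      by_cases h : e ∈ l'
      · rw [if_pos h, if_pos (hf.mpr h)]
      · rw [if_neg h, if_neg (fun hc => h (hf.mp hc))]

lemma trail_two_edges_parity {V : Type} (H : SimpleGraph V) {u w : V} (p : H.Walk u w)
    (hp : p.IsTrail) (v : V) (e f : Sym2 V) (hef : e ≠ f) (hve : v ∈ e) (hvf : v ∈ f)
    (hall : ∀ g ∈ H.edgeSet, v ∈ g → g = e ∨ g = f) :
    ((if e ∈ p.edges then 1 else 0) + (if f ∈ p.edges then 1 else 0)) % 2 =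
      ((if v = u then 1 else 0) + (if v = w then 1 else 0)) % 2 := by
  have h1 := walk_countP_parity H p v
  rw [List.countP_eq_length_filter] at h1
  set l := p.edges.filter (fun g => decide (v ∈ g)) with hl
  have hnd : l.Nodup := hp.edges_nodup.filter _
  have hsub : ∀ g ∈ l, g = e ∨ g = f := by
    intro g hg
    rw [hl, List.mem_filter, decide_eq_true_eq] at hg
    exact hall g (p.edges_subset_edgeSet hg.1) hg.2
  have hlen := pairlist_length l hnd e f hef hsub
  have hmeme : e ∈ l ↔ e ∈ p.edges := by
    rw [hl, List.mem_filter, decide_eq_true_eq]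
    exact ⟨fun h => h.1, fun h => ⟨h, hve⟩⟩
  have hmemf : f ∈ l ↔ f ∈ p.edges := by
    rw [hl, List.mem_filter, decide_eq_true_eq]
    exact ⟨fun h => h.1, fun h => ⟨h, hvf⟩⟩
  rw [← h1, hlen]
  simp only [← hmeme, ← hmemf]
  congr!

lemma flip_lemma {V : Type} [Fintype V] (H : SimpleGraph V)
    (hreg : ∀ w, esdeg H.edgeSet w = 0 ∨ esdeg H.edgeSet w = 2)
    (hconn : ∀ u w, (∃ e ∈ H.edgeSet, u ∈ e) → (∃ e ∈ H.edgeSet, w ∈ e) → H.Reachable u w)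
    (T : Set V) (hT : ∀ w ∈ T, ∃ e ∈ H.edgeSet, w ∈ e) (heven : Even T.ncard) :
    ∃ x : Sym2 V → Bool, ∀ v e f, e ∈ H.edgeSet → f ∈ H.edgeSet → v ∈ e → v ∈ f → e ≠ f →
      ((x e = x f) ↔ v ∉ T) := by
  generalize hn : T.ncard = n
  induction n using Nat.strong_induction_on generalizing T with
  | _ n ih =>
    rcases Nat.eq_zero_or_pos n with rfl | hpos
    · have hTe : T = ∅ := by
        rw [← Set.ncard_eq_zero (Set.toFinite T)]; exact hn
      subst hTe
      exact ⟨fun _ => true, fun v e f _ _ _ _ _ => by simp⟩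
    · -- pick two distinct elements of T
      have hne : T.Nonempty := by
        rw [← Set.ncard_pos (Set.toFinite T)] at *; omega
      obtain ⟨u, hu⟩ := hne
      have h1lt : 1 < T.ncard := by
        rcases heven with ⟨k, hk⟩; omega
      obtain ⟨w, hw, hwu⟩ := Set.exists_ne_of_one_lt_ncard h1lt u
      -- a path between them
      obtain ⟨p0⟩ := hconn u w (hT u hu) (hT w hw)
      set p := p0.bypass with hp0
      have hp : p.IsPath := SimpleGraph.Walk.bypass_isPath p0
      -- recurse on T minus the two endpoints
      set T' := T \ {u, w} with hT'
      have hsubT : ({u, w} : Set V) ⊆ T := by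
        rintro z (rfl | rfl); exact hu; exact hw
      have hT'card : T'.ncard = n - 2 := by
        rw [hT', Set.ncard_diff hsubT, hn, Set.ncard_pair (Ne.symm hwu)]
      have hT'even : Even (T'.ncard) := by
        rcases heven with ⟨k, hk⟩
        rw [hT'card]
        exact ⟨k - 1, by omega⟩
      obtain ⟨x', hx'⟩ := ih (n - 2) (by omega) T' (fun z hz => hT z hz.1) hT'even hT'card
      refine ⟨fun g => xor (x' g) (decide (g ∈ p.edges)), ?_⟩
      intro v e f he hf hve hvf hef
      have hall : ∀ g ∈ H.edgeSet, v ∈ g → g = e ∨ g = f := by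
        intro g hg hvg
        have hEA : {e' ∈ H.edgeSet | v ∈ e'} = {e, f} := by
          refine (Set.eq_of_subset_of_ncard_le ?_ ?_ (Set.toFinite _)).symm
          · rintro z (rfl | rfl); exact ⟨he, hve⟩; exact ⟨hf, hvf⟩
          · rcases hreg v with h0 | h2
            · exfalso
              have : e ∈ {e' ∈ H.edgeSet | v ∈ e'} := ⟨he, hve⟩
              rw [esdeg_def] at h0
              rw [Set.ncard_eq_zero (Set.toFinite _)] at h0
              simp [h0] at this
            · rw [esdeg_def] at h2
              rw [h2, Set.ncard_pair hef]
        have : g ∈ ({e, f} : Set (Sym2 V)) := by rw [← hEA]; exact ⟨hg, hvg⟩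
        exact this
      have hkey := trail_two_edges_parity H p hp.isTrail v e f hef hve hvf hall
      have hx := hx' v e f he hf hve hvf hef
      have hvT' : v ∉ T' ↔ (v ∉ T ∨ v = u ∨ v = w) := by
        rw [hT']
        simp only [Set.mem_diff, Set.mem_insert_iff, Set.mem_singleton_iff]
        tauto
      by_cases hvu : v = u <;> by_cases hvw : v = w
      · exact absurd (hvu.symm.trans hvw) (Ne.symm hwu)
      · have hx'eq : x' e = x' f := hx.mpr (hvT'.mpr (Or.inr (Or.inl hvu)))
        have hvT : v ∈ T := hvu ▸ hu
        rw [if_pos hvu, if_neg hvw] at hkey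
        by_cases h2 : e ∈ p.edges <;> by_cases h3 : f ∈ p.edges
        · rw [if_pos h2, if_pos h3] at hkey; exfalso; omega
        · simp [h2, h3, hx'eq, hvT]
        · simp [h2, h3, hx'eq, hvT]
        · rw [if_neg h2, if_neg h3] at hkey; exfalso; omega
      · have hx'eq : x' e = x' f := hx.mpr (hvT'.mpr (Or.inr (Or.inr hvw)))
        have hvT : v ∈ T := hvw ▸ hw
        rw [if_neg hvu, if_pos hvw] at hkey
        by_cases h2 : e ∈ p.edges <;> by_cases h3 : f ∈ p.edges
        · rw [if_pos h2, if_pos h3] at hkey; exfalso; omega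
        · simp [h2, h3, hx'eq, hvT]
        · simp [h2, h3, hx'eq, hvT]
        · rw [if_neg h2, if_neg h3] at hkey; exfalso; omega
      · have hTT : v ∉ T' ↔ v ∉ T := by rw [hvT']; tauto
        rw [if_neg hvu, if_neg hvw] at hkey
        by_cases h2 : e ∈ p.edges <;> by_cases h3 : f ∈ p.edges
        · have hb2 : decide (e ∈ p.edges) = true := decide_eq_true h2
          have hb3 : decide (f ∈ p.edges) = true := decide_eq_true h3
          simp only [hb2, hb3, Bool.xor_true]
          have hni : ((!(x' e)) = (!(x' f))) ↔ (x' e = x' f) := by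
            cases x' e <;> cases x' f <;> simp
          exact hni.trans (hx.trans hTT)
        · rw [if_pos h2, if_neg h3] at hkey; exfalso; omega
        · rw [if_neg h2, if_pos h3] at hkey; exfalso; omega
        · have hb2 : decide (e ∈ p.edges) = false := decide_eq_false h2
          have hb3 : decide (f ∈ p.edges) = false := decide_eq_false h3
          simp only [hb2, hb3, Bool.xor_false]
          exact hx.trans hTT

section Phase2
variable {V : Type} [Fintype V]

instance : Finite (Sym2 V) := by
  have : Finite (V × V) := inferInstance
  exact Quot.finite _

lemma esdeg_split (G B : SimpleGraph V) (hBG : B ≤ G) (v : V) :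
    esdeg B.edgeSet v + esdeg (G.edgeSet \ B.edgeSet) v = esdeg G.edgeSet v := by
  rw [esdeg_def, esdeg_def, esdeg_def]
  rw [← Set.ncard_union_eq (by
    rw [Set.disjoint_left]
    rintro e ⟨heB, -⟩ ⟨⟨-, henB⟩, -⟩
    exact henB heB) (Set.toFinite _) (Set.toFinite _)]
  congr 1
  ext e
  have hsub := SimpleGraph.edgeSet_mono hBG
  constructor
  · rintro (⟨h1, h2⟩ | ⟨⟨h1, -⟩, h2⟩) <;> exact ⟨by solve_by_elim, h2⟩
  · rintro ⟨h1, h2⟩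
    by_cases hB : e ∈ B.edgeSet
    · exact Or.inl ⟨hB, h2⟩
    · exact Or.inr ⟨⟨h1, hB⟩, h2⟩

lemma even_endpoints (S : Set (Sym2 V)) :
    (∀ e ∈ S, ¬ e.IsDiag) → ((∀ e ∈ S, ∀ f ∈ S, ∀ v, v ∈ e → v ∈ f → e = f) →
      Even {v | ∃ e ∈ S, v ∈ e}.ncard) := by
  refine Set.Finite.induction_on
    (motive := fun S _ => (∀ e ∈ S, ¬ e.IsDiag) → (∀ e ∈ S, ∀ f ∈ S, ∀ v, v ∈ e → v ∈ f → e = f) →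
      Even {v | ∃ e ∈ S, v ∈ e}.ncard) S (Set.toFinite S) ?_ ?_
  · intro _ _; simp
  · intro a s hans hsfin ih hdiag hdisj
    have hset : {v | ∃ e ∈ insert a s, v ∈ e} = {v | v ∈ a} ∪ {v | ∃ e ∈ s, v ∈ e} := by
      ext z
      simp only [Set.mem_setOf_eq, Set.mem_union, Set.mem_insert_iff]
      constructor
      · rintro ⟨e, (rfl | he), hz⟩
        · exact Or.inl hz
        · exact Or.inr ⟨e, he, hz⟩
      · rintro (hz | ⟨e, he, hz⟩)
        · exact ⟨a, Or.inl rfl, hz⟩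
        · exact ⟨e, Or.inr he, hz⟩
    rw [hset, Set.ncard_union_eq ?dis (Set.toFinite _) (Set.toFinite _)]
    case dis =>
      rw [Set.disjoint_left]
      rintro z hza ⟨e, hes, hze⟩
      exact hans (hdisj a (Set.mem_insert a s) e (Set.mem_insert_of_mem a hes) z hza hze ▸ hes)
    have hcard2 : {v | v ∈ a}.ncard = 2 := by
      induction a with
      | h xx yy =>
        have hxy : xx ≠ yy := by
          intro hcon
          exact hdiag _ (Set.mem_insert _ _) (by rw [Sym2.isDiag_iff_proj_eq]; exact hcon)
        have : {v | v ∈ s(xx, yy)} = {xx, yy} := by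
          ext z; simp [Sym2.mem_iff]
        rw [this, Set.ncard_pair hxy]
    rw [hcard2]
    have hih := ih (fun e he => hdiag e (Set.mem_insert_of_mem a he))
      (fun e he f hf z hze hzf => hdisj e (Set.mem_insert_of_mem a he) f (Set.mem_insert_of_mem a hf) z hze hzf)
    rcases hih with ⟨k, hk⟩
    exact ⟨k + 1, by omega⟩

lemma z_decide1 : ∀ a : ZMod 3, a + 1 ≠ a ∧ a + 2 ≠ a ∧ a + 1 ≠ a + 2 := by decide
lemma z_decide2 : ∀ a b : ZMod 3, a ≠ b → -(a + b) ≠ a ∧ -(a + b) ≠ b := by decide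
lemma z_decide3 : ∀ a b : ZMod 3, b ≠ a → b = a + 1 ∨ b = a + 2 := by decide
lemma z_decide4 : ∀ c1 c2 c3 d : ZMod 3, c1 ≠ c2 → c1 ≠ c3 → c2 ≠ c3 →
    d = c1 ∨ d = c2 ∨ d = c3 := by decide

def cind : Fin 6 → ZMod 3 := ![0, 0, 1, 1, 2, 2]
def bind' : Fin 6 → Bool := ![false, true, false, true, false, true]
def idx (a : ZMod 3) (s : Bool) : Fin 6 :=
  ⟨2 * a.val + (if s then 1 else 0), by
    have h := ZMod.val_lt (n := 3) a
    split <;> omega⟩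

lemma idx_cind : ∀ (a : ZMod 3) (s : Bool), cind (idx a s) = a := by decide
lemma idx_bind : ∀ (a : ZMod 3) (s : Bool), bind' (idx a s) = s := by decide
lemma idx_surj : ∀ i : Fin 6, idx (cind i) (bind' i) = i := by decide

end Phase2

section Phase2main
variable {V : Type} [Fintype V]

lemma phase2 (G B : SimpleGraph V) (hBG : B ≤ G) (hcub : IsCubic G)
    (c : Sym2 V → ZMod 3) (h : GC B c) : HasSixDoubleCover G := by
  classical
  set M : Set (Sym2 V) := G.edgeSet \ B.edgeSet with hMdef
  have hGdeg : ∀ v, esdeg G.edgeSet v = 3 := fun v => by rw [esdeg_edgeSet]; exact hcub v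
  have hsplit : ∀ v, esdeg B.edgeSet v + esdeg M v = 3 :=
    fun v => (esdeg_split G B hBG v).trans (hGdeg v)
  -- vertex dichotomy
  have hdich : ∀ v, (esdeg B.edgeSet v = 2 ∧ esdeg M v = 1) ∨
      (esdeg B.edgeSet v = 3 ∧ esdeg M v = 0) := by
    intro v
    rcases h.deg23 v with h2 | h3
    · exact Or.inl ⟨h2, by have := hsplit v; omega⟩
    · exact Or.inr ⟨h3, by have := hsplit v; omega⟩
  have hMv : ∀ v, (∃ m ∈ M, v ∈ m) → esdeg B.edgeSet v = 2 ∧ esdeg M v = 1 := by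
    intro v ⟨m, hm, hvm⟩
    have hpos : 0 < esdeg M v := by
      rw [esdeg_def]
      rw [Set.ncard_pos (Set.toFinite _)]
      exact ⟨m, hm, hvm⟩
    rcases hdich v with hh | hh
    · exact hh
    · omega
  -- unique M-edge at a vertex
  have hMuniq : ∀ v m m', m ∈ M → v ∈ m → m' ∈ M → v ∈ m' → m = m' := by
    intro v m m' hm hvm hm' hvm'
    by_contra hne
    have hsub2 : ({m, m'} : Set (Sym2 V)) ⊆ {e ∈ M | v ∈ e} := by
      rintro z (rfl | rfl); exact ⟨hm, hvm⟩; exact ⟨hm', hvm'⟩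
    have h2 : 2 ≤ esdeg M v := by
      rw [esdeg_def, ← Set.ncard_pair hne]
      exact Set.ncard_le_ncard hsub2 (Set.toFinite _)
    have := (hMv v ⟨m, hm, hvm⟩).2
    omega
  -- the common colour at degree-2 vertices
  have hmu : ∃ μ : V → ZMod 3, ∀ v, esdeg B.edgeSet v = 2 →
      ∀ e ∈ B.edgeSet, v ∈ e → c e = μ v := by
    refine ⟨fun v => if hv : ∃ e ∈ B.edgeSet, v ∈ e then c hv.choose else 0, ?_⟩
    intro v hdeg e he hve
    have hv : ∃ e ∈ B.edgeSet, v ∈ e := ⟨e, he, hve⟩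
    dsimp only
    rw [dif_pos hv]
    exact h.mono2 v hdeg e he hv.choose hv.choose_spec.1 hve hv.choose_spec.2
  obtain ⟨μ, hμ⟩ := hmu
  -- the missing colour of a matching edge
  have hmissex : ∃ miss : Sym2 V → ZMod 3, ∀ a b : V,
      miss s(a, b) = if μ a = μ b then μ a + 1 else -(μ a + μ b) := by
    refine ⟨Sym2.lift ⟨fun a b => if μ a = μ b then μ a + 1 else -(μ a + μ b), ?_⟩,
      fun a b => rfl⟩
    intro a b
    dsimp only
    by_cases hab : μ a = μ b
    · rw [if_pos hab, if_pos hab.symm, hab]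
    · rw [if_neg hab, if_neg (Ne.symm hab), add_comm]
  obtain ⟨miss, hmiss⟩ := hmissex
  have hmiss_ne : ∀ m ∈ M, ∀ v ∈ m, μ v ≠ miss m := by
    intro m hm
    induction m with
    | h a b =>
      intro v hv
      rw [hmiss a b]
      rw [Sym2.mem_iff] at hv
      by_cases hab : μ a = μ b
      · rw [if_pos hab]
        rcases hv with rfl | rfl
        · exact Ne.symm (z_decide1 (μ v)).1
        · rw [← hab]; exact Ne.symm (z_decide1 (μ a)).1
      · rw [if_neg hab]
        rcases hv with rfl | rfl
        · exact Ne.symm (z_decide2 (μ v) (μ b) hab).1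
        · exact Ne.symm (z_decide2 (μ a) (μ v) hab).2
  -- the flip sets
  set T : ZMod 3 → Set V := fun α => {v | ∃ m ∈ M, v ∈ m ∧ miss m = α} with hTdef
  have hTmem : ∀ α v, v ∈ T α → esdeg B.edgeSet v = 2 ∧ μ v ≠ α := by
    rintro α v ⟨m, hm, hvm, rfl⟩
    exact ⟨(hMv v ⟨m, hm, hvm⟩).1, hmiss_ne m hm v hvm⟩
  have hTeven : ∀ α, Even (T α).ncard := by
    intro α
    have hset : T α = {v | ∃ e ∈ {m ∈ M | miss m = α}, v ∈ e} := by
      ext z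
      simp only [hTdef, Set.mem_setOf_eq]
      tauto
    rw [hset]
    refine even_endpoints _ (fun e he => ?_) (fun e he f hf z hze hzf => ?_)
    · exact SimpleGraph.not_isDiag_of_mem_edgeSet G he.1.1
    · exact hMuniq z e f he.1 hze hf.1 hzf
  -- the two B-edges at a vertex
  have key2 : ∀ v, esdeg B.edgeSet v = 2 → ∃ e f, e ≠ f ∧ e ∈ B.edgeSet ∧ f ∈ B.edgeSet ∧
      v ∈ e ∧ v ∈ f ∧ c e = μ v ∧ c f = μ v ∧ {g ∈ B.edgeSet | v ∈ g} = {e, f} := by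
    intro v hdeg
    rw [esdeg_def, Set.ncard_eq_two] at hdeg
    obtain ⟨e, f, hef, hset⟩ := hdeg
    have he : e ∈ {g ∈ B.edgeSet | v ∈ g} := by rw [hset]; exact Or.inl rfl
    have hf : f ∈ {g ∈ B.edgeSet | v ∈ g} := by rw [hset]; exact Or.inr rfl
    have hdeg2 : esdeg B.edgeSet v = 2 := by rw [esdeg_def, hset, Set.ncard_pair hef]
    exact ⟨e, f, hef, he.1, hf.1, he.2, hf.2, hμ v hdeg2 e he.1 he.2, hμ v hdeg2 f hf.1 hf.2, hset⟩
  -- the class-graph edge sets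
  have hHset : ∀ α, (classGraph B c {x | x ≠ α}).edgeSet = {e ∈ B.edgeSet | c e ≠ α} :=
    fun α => classGraph_edgeSet B c _
  -- 0/2-regularity of the class graphs, described via explicit edge pairs
  have key3 : ∀ v, esdeg B.edgeSet v = 3 → ∀ α, ∃ e f, e ≠ f ∧ e ∈ B.edgeSet ∧ f ∈ B.edgeSet ∧
      v ∈ e ∧ v ∈ f ∧ c e ≠ α ∧ c f ≠ α ∧ {g ∈ B.edgeSet | v ∈ g ∧ c g ≠ α} = {e, f} := by
    intro v hdeg α
    have hd3 := hdeg
    rw [esdeg_def, Set.ncard_eq_three] at hd3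
    obtain ⟨e1, e2, e3, h12, h13, h23, hset⟩ := hd3
    have he1 : e1 ∈ {g ∈ B.edgeSet | v ∈ g} := by rw [hset]; simp
    have he2 : e2 ∈ {g ∈ B.edgeSet | v ∈ g} := by rw [hset]; simp
    have he3 : e3 ∈ {g ∈ B.edgeSet | v ∈ g} := by rw [hset]; simp
    have hc12 : c e1 ≠ c e2 := h.tri3 v hdeg e1 he1.1 e2 he2.1 he1.2 he2.2 h12
    have hc13 : c e1 ≠ c e3 := h.tri3 v hdeg e1 he1.1 e3 he3.1 he1.2 he3.2 h13
    have hc23 : c e2 ≠ c e3 := h.tri3 v hdeg e2 he2.1 e3 he3.1 he2.2 he3.2 h23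
    have hsetf : ∀ g a b : Sym2 V, ({e1, e2, e3} : Set (Sym2 V)) = {g, a, b} →
        c g = α → c a ≠ α → c b ≠ α → a ∈ {g' ∈ B.edgeSet | v ∈ g'} →
        b ∈ {g' ∈ B.edgeSet | v ∈ g'} →
        {g' ∈ B.edgeSet | v ∈ g' ∧ c g' ≠ α} = {a, b} := by
      intro g a b hperm hcg hca hcb hma hmb
      ext z
      constructor
      · rintro ⟨hz1, hz2, hz3⟩
        have hz : z ∈ ({g, a, b} : Set (Sym2 V)) := by
          rw [← hperm, ← hset]; exact ⟨hz1, hz2⟩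
        rcases hz with rfl | hz
        · exact absurd hcg hz3
        · exact hz
      · rintro (rfl | rfl)
        · exact ⟨hma.1, hma.2, hca⟩
        · exact ⟨hmb.1, hmb.2, hcb⟩
    rcases z_decide4 (c e1) (c e2) (c e3) α hc12 hc13 hc23 with hα | hα | hα
    · refine ⟨e2, e3, h23, he2.1, he3.1, he2.2, he3.2,
        fun hh => hc12 (hα ▸ hh).symm, fun hh => hc13 (hα ▸ hh).symm, ?_⟩
      exact hsetf e1 e2 e3 rfl hα.symm (fun hh => hc12 (hα ▸ hh).symm)
        (fun hh => hc13 (hα ▸ hh).symm) he2 he3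
    · refine ⟨e1, e3, h13, he1.1, he3.1, he1.2, he3.2,
        fun hh => hc12 (hα ▸ hh), fun hh => hc23 (hα ▸ hh).symm, ?_⟩
      refine hsetf e2 e1 e3 (by ext z; constructor <;> (rintro (rfl | rfl | rfl) <;> tauto))
        hα.symm (fun hh => hc12 (hα ▸ hh)) (fun hh => hc23 (hα ▸ hh).symm) he1 he3
    · refine ⟨e1, e2, h12, he1.1, he2.1, he1.2, he2.2,
        fun hh => hc13 (hα ▸ hh), fun hh => hc23 (hα ▸ hh), ?_⟩
      refine hsetf e3 e1 e2 (by ext z; constructor <;> (rintro (rfl | rfl | rfl) <;> tauto))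
        hα.symm (fun hh => hc13 (hα ▸ hh)) (fun hh => hc23 (hα ▸ hh)) he1 he2
  -- regularity of the class graphs
  have hreg : ∀ α v, esdeg (classGraph B c {x | x ≠ α}).edgeSet v = 0 ∨
      esdeg (classGraph B c {x | x ≠ α}).edgeSet v = 2 := by
    intro α v
    have hEA : {g ∈ (classGraph B c {x | x ≠ α}).edgeSet | v ∈ g} =
        {g ∈ B.edgeSet | v ∈ g ∧ c g ≠ α} := by
      ext z
      rw [Set.mem_setOf_eq, Set.mem_setOf_eq, hHset α]
      constructor
      · rintro ⟨⟨h1, h2⟩, h3⟩; exact ⟨h1, h3, h2⟩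
      · rintro ⟨h1, h2, h3⟩; exact ⟨⟨h1, h3⟩, h2⟩
    rcases hdich v with ⟨h2, -⟩ | ⟨h3, -⟩
    · obtain ⟨e, f, hef, he, hf, hve, hvf, hce, hcf, hset⟩ := key2 v h2
      by_cases hμα : μ v = α
      · left
        rw [esdeg_def, hEA]
        rw [show {g ∈ B.edgeSet | v ∈ g ∧ c g ≠ α} = (∅ : Set (Sym2 V)) from ?_]
        · simp
        · ext z
          simp only [Set.mem_empty_iff_false, iff_false, Set.mem_setOf_eq, not_and]
          intro hz1 hz2 hz3
          have hz : z ∈ ({e, f} : Set (Sym2 V)) := by rw [← hset]; exact ⟨hz1, hz2⟩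
          rcases hz with rfl | rfl
          · exact hz3 (hce.trans hμα)
          · exact hz3 (hcf.trans hμα)
      · right
        rw [esdeg_def, hEA]
        rw [show {g ∈ B.edgeSet | v ∈ g ∧ c g ≠ α} = ({e, f} : Set (Sym2 V)) from ?_]
        · exact Set.ncard_pair hef
        · ext z
          constructor
          · rintro ⟨hz1, hz2, -⟩
            rw [← hset]; exact ⟨hz1, hz2⟩
          · rintro (rfl | rfl)
            · exact ⟨he, hve, fun hc => hμα (hce ▸ hc)⟩
            · exact ⟨hf, hvf, fun hc => hμα (hcf ▸ hc)⟩
    · obtain ⟨e, f, hef, he, hf, hve, hvf, hce, hcf, hset⟩ := key3 v h3 α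
      right
      rw [esdeg_def, hEA, hset, Set.ncard_pair hef]
  -- apply the switching lemma for each colour
  have hflip : ∀ α : ZMod 3, ∃ x : Sym2 V → Bool, ∀ v e f,
      e ∈ (classGraph B c {x | x ≠ α}).edgeSet → f ∈ (classGraph B c {x | x ≠ α}).edgeSet →
      v ∈ e → v ∈ f → e ≠ f → ((x e = x f) ↔ v ∉ T α) := by
    intro α
    refine flip_lemma _ (hreg α) (h.conn α) (T α) ?_ (hTeven α)
    intro w hw
    obtain ⟨hdeg2, hμα⟩ := hTmem α w hw
    obtain ⟨e, f, hef, he, hf, hve, hvf, hce, hcf, hset⟩ := key2 w hdeg2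
    exact ⟨e, by rw [hHset α]; exact ⟨he, fun hc => hμα (hce ▸ hc)⟩, hve⟩
  choose x hx using hflip
  have hxmem : ∀ α (e : Sym2 V), e ∈ B.edgeSet → c e ≠ α →
      e ∈ (classGraph B c {x | x ≠ α}).edgeSet := by
    intro α e he hce
    rw [hHset α]; exact ⟨he, hce⟩
  -- the six even subgraphs
  set Dcl : ZMod 3 → Bool → Set (Sym2 V) := fun α s =>
    {e ∈ B.edgeSet | c e ≠ α ∧ x α e = s} ∪ {m ∈ M | miss m = α} with hDdef
  refine ⟨fun i => Dcl (cind i) (bind' i), fun i => ⟨?_, ?_⟩, fun e he => ?_⟩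
  · -- contained in G
    rintro z (⟨hz, -⟩ | ⟨hz, -⟩)
    · exact SimpleGraph.edgeSet_mono hBG hz
    · exact hz.1
  · -- evenness
    intro v
    set α := cind i with hα
    set s := bind' i with hs
    have hEA : {g ∈ Dcl α s | v ∈ g} =
        {g ∈ B.edgeSet | v ∈ g ∧ c g ≠ α ∧ x α g = s} ∪ {m ∈ M | v ∈ m ∧ miss m = α} := by
      ext z
      simp only [hDdef, Set.mem_setOf_eq, Set.mem_union]
      tauto
    have hdisjBM : Disjoint {g ∈ B.edgeSet | v ∈ g ∧ c g ≠ α ∧ x α g = s}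
        {m ∈ M | v ∈ m ∧ miss m = α} := by
      rw [Set.disjoint_left]
      rintro z ⟨hzB, -⟩ ⟨⟨-, hzM⟩, -⟩
      exact hzM hzB
    rw [esdeg_def, hEA, Set.ncard_union_eq hdisjBM (Set.toFinite _) (Set.toFinite _)]
    rcases hdich v with ⟨h2, hm1⟩ | ⟨h3, hm0⟩
    · -- degree-2 vertex of B
      obtain ⟨e, f, hef, he, hf, hve, hvf, hce, hcf, hset⟩ := key2 v h2
      have hm1' : {g ∈ M | v ∈ g}.ncard = 1 := hm1
      rw [Set.ncard_eq_one] at hm1'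
      obtain ⟨m0, hm0set⟩ := hm1'
      have hm0M : m0 ∈ M ∧ v ∈ m0 := by
        have : m0 ∈ {g ∈ M | v ∈ g} := by rw [hm0set]; rfl
        exact this
      by_cases hvT : v ∈ T α
      · obtain ⟨m, hm, hvm, hmα⟩ := hvT
        have hmiss0 : miss m0 = α := by rw [hMuniq v m0 m hm0M.1 hm0M.2 hm hvm]; exact hmα
        have hμα : μ v ≠ α := (hTmem α v ⟨m, hm, hvm, hmα⟩).2
        have hceα : c e ≠ α := fun hc => hμα (hce ▸ hc)
        have hcfα : c f ≠ α := fun hc => hμα (hcf ▸ hc)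
        have hxef : ¬ (x α e = x α f) := by
          rw [hx α v e f (hxmem α e he hceα) (hxmem α f hf hcfα) hve hvf hef]
          simp only [Set.not_notMem]
          exact ⟨m, hm, hvm, hmα⟩
        have hMpart : {m' ∈ M | v ∈ m' ∧ miss m' = α} = {m0} := by
          ext z
          constructor
          · rintro ⟨hz1, hz2, hz3⟩
            rw [Set.mem_singleton_iff]
            exact hMuniq v z m0 hz1 hz2 hm0M.1 hm0M.2
          · rintro rfl
            exact ⟨hm0M.1, hm0M.2, hmiss0⟩
        have hBpart : ∀ g : Sym2 V, (g ∈ B.edgeSet ∧ v ∈ g ∧ c g ≠ α ∧ x α g = s) ↔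
            (g ∈ ({e, f} : Set (Sym2 V)) ∧ x α g = s) := by
          intro g
          constructor
          · rintro ⟨h1', h2', h3', h4'⟩
            exact ⟨by rw [← hset]; exact ⟨h1', h2'⟩, h4'⟩
          · rintro ⟨hg, h4'⟩
            rcases hg with rfl | rfl
            · exact ⟨he, hve, hceα, h4'⟩
            · exact ⟨hf, hvf, hcfα, h4'⟩
        by_cases hxe : x α e = s
        · have hxf : ¬ x α f = s := fun hc => hxef (hxe.trans hc.symm)
          rw [show {g ∈ B.edgeSet | v ∈ g ∧ c g ≠ α ∧ x α g = s} = ({e} : Set (Sym2 V)) from ?_,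
            hMpart]
          · simp
          · ext z
            rw [Set.mem_setOf_eq, hBpart z, Set.mem_singleton_iff]
            constructor
            · rintro ⟨(rfl | rfl), h4'⟩
              · rfl
              · exact absurd h4' hxf
            · rintro rfl
              exact ⟨Or.inl rfl, hxe⟩
        · have hxf : x α f = s := by
            revert hxef hxe
            cases hb1 : x α e <;> cases hb2 : x α f <;> cases hb3 : s <;> decide
          rw [show {g ∈ B.edgeSet | v ∈ g ∧ c g ≠ α ∧ x α g = s} = ({f} : Set (Sym2 V)) from ?_,
            hMpart]
          · simp
          · ext z
            rw [Set.mem_setOf_eq, hBpart z, Set.mem_singleton_iff]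
            constructor
            · rintro ⟨(rfl | rfl), h4'⟩
              · exact absurd h4' hxe
              · rfl
            · rintro rfl
              exact ⟨Or.inr rfl, hxf⟩
      · -- v ∉ T α
        have hMpart : {m' ∈ M | v ∈ m' ∧ miss m' = α} = (∅ : Set (Sym2 V)) := by
          ext z
          simp only [Set.mem_empty_iff_false, iff_false, Set.mem_setOf_eq, not_and]
          intro hz1 hz2 hz3
          exact hvT ⟨z, hz1, hz2, hz3⟩
        rw [hMpart]
        by_cases hμα : μ v = α
        · rw [show {g ∈ B.edgeSet | v ∈ g ∧ c g ≠ α ∧ x α g = s} = (∅ : Set (Sym2 V)) from ?_]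
          · simp
          · ext z
            simp only [Set.mem_empty_iff_false, iff_false, Set.mem_setOf_eq, not_and]
            intro hz1 hz2 hz3 
            exfalso
            have hz : z ∈ ({e, f} : Set (Sym2 V)) := by rw [← hset]; exact ⟨hz1, hz2⟩
            rcases hz with rfl | rfl
            · exact hz3 (hce.trans hμα)
            · exact hz3 (hcf.trans hμα)
        · have hceα : c e ≠ α := fun hc => hμα (hce ▸ hc)
          have hcfα : c f ≠ α := fun hc => hμα (hcf ▸ hc)
          have hxef : x α e = x α f := by
            rw [hx α v e f (hxmem α e he hceα) (hxmem α f hf hcfα) hve hvf hef]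
            exact hvT
          by_cases hxe : x α e = s
          · rw [show {g ∈ B.edgeSet | v ∈ g ∧ c g ≠ α ∧ x α g = s} = ({e, f} : Set (Sym2 V))
                from ?_]
            · rw [Set.ncard_pair hef]
              simp
            · ext z
              constructor
              · rintro ⟨hz1, hz2, -, -⟩
                rw [← hset]; exact ⟨hz1, hz2⟩
              · rintro (rfl | rfl)
                · exact ⟨he, hve, hceα, hxe⟩
                · exact ⟨hf, hvf, hcfα, hxef ▸ hxe⟩
          · rw [show {g ∈ B.edgeSet | v ∈ g ∧ c g ≠ α ∧ x α g = s} = (∅ : Set (Sym2 V)) from ?_]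
            · simp
            · ext z
              simp only [Set.mem_empty_iff_false, iff_false, Set.mem_setOf_eq, not_and]
              intro hz1 hz2 hz3 hz4
              have hz : z ∈ ({e, f} : Set (Sym2 V)) := by rw [← hset]; exact ⟨hz1, hz2⟩
              rcases hz with rfl | rfl
              · exact hxe hz4
              · exact hxe (hxef.trans hz4)
    · -- degree-3 vertex of B
      have hMpart : {m' ∈ M | v ∈ m' ∧ miss m' = α} = (∅ : Set (Sym2 V)) := by
        have hm0' : {g ∈ M | v ∈ g}.ncard = 0 := hm0
        rw [Set.ncard_eq_zero (Set.toFinite _)] at hm0'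
        ext z
        simp only [Set.mem_empty_iff_false, iff_false, Set.mem_setOf_eq, not_and]
        intro hz1 hz2 hz3
        have : z ∈ {g ∈ M | v ∈ g} := ⟨hz1, hz2⟩
        rw [hm0'] at this
        exact this
      rw [hMpart]
      have hvT : v ∉ T α := by
        intro hvT
        have := (hTmem α v hvT).1
        omega
      obtain ⟨e, f, hef, he, hf, hve, hvf, hce, hcf, hset⟩ := key3 v h3 α
      have hxef : x α e = x α f := by
        rw [hx α v e f (hxmem α e he hce) (hxmem α f hf hcf) hve hvf hef]
        exact hvT
      by_cases hxe : x α e = s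
      · rw [show {g ∈ B.edgeSet | v ∈ g ∧ c g ≠ α ∧ x α g = s} = ({e, f} : Set (Sym2 V))
            from ?_]
        · rw [Set.ncard_pair hef]
          simp
        · ext z
          constructor
          · rintro ⟨hz1, hz2, hz3, -⟩
            rw [← hset]; exact ⟨hz1, hz2, hz3⟩
          · rintro (rfl | rfl)
            · exact ⟨he, hve, hce, hxe⟩
            · exact ⟨hf, hvf, hcf, hxef ▸ hxe⟩
      · rw [show {g ∈ B.edgeSet | v ∈ g ∧ c g ≠ α ∧ x α g = s} = (∅ : Set (Sym2 V)) from ?_]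
        · simp
        · ext z
          simp only [Set.mem_empty_iff_false, iff_false, Set.mem_setOf_eq, not_and]
          intro hz1 hz2 hz3 hz4
          have hz : z ∈ ({e, f} : Set (Sym2 V)) := by rw [← hset]; exact ⟨hz1, hz2, hz3⟩
          rcases hz with rfl | rfl
          · exact hxe hz4
          · exact hxe (hxef.trans hz4)
  · -- each edge is covered exactly twice
    by_cases heB : e ∈ B.edgeSet
    · have hmemD : ∀ i : Fin 6, e ∈ Dcl (cind i) (bind' i) ↔
          (c e ≠ cind i ∧ x (cind i) e = bind' i) := by
        intro i
        constructor
        · rintro (⟨-, h1'⟩ | ⟨hM', -⟩)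
          · exact h1'
          · exact absurd heB hM'.2
        · intro hh
          exact Or.inl ⟨heB, hh⟩
      have hseteq : {i : Fin 6 | e ∈ Dcl (cind i) (bind' i)} =
          {idx (c e + 1) (x (c e + 1) e), idx (c e + 2) (x (c e + 2) e)} := by
        ext i
        rw [Set.mem_setOf_eq, hmemD i]
        constructor
        · rintro ⟨h1', h2'⟩
          rcases z_decide3 (c e) (cind i) (Ne.symm h1') with hc | hc
          · left
            rw [← idx_surj i]
            rw [hc] at h2' ⊢
            rw [← h2']
          · right
            rw [← idx_surj i]
            rw [hc] at h2' ⊢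
            rw [← h2']
            rfl
        · rintro (rfl | rfl) <;> rw [idx_cind, idx_bind]
          · exact ⟨fun hh => (z_decide1 (c e)).1 hh.symm, rfl⟩
          · exact ⟨fun hh => (z_decide1 (c e)).2.1 hh.symm, rfl⟩
      rw [hseteq]
      refine Set.ncard_pair ?_
      intro hcon
      have := congrArg cind hcon
      rw [idx_cind, idx_cind] at this
      exact (z_decide1 (c e)).2.2 this
    · have heM : e ∈ M := ⟨he, heB⟩
      have hmemD : ∀ i : Fin 6, e ∈ Dcl (cind i) (bind' i) ↔ miss e = cind i := by
        intro i
        constructor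
        · rintro (⟨h1', -⟩ | ⟨-, h2'⟩)
          · exact absurd h1' heB
          · exact h2'
        · intro hh
          exact Or.inr ⟨heM, hh⟩
      have hseteq : {i : Fin 6 | e ∈ Dcl (cind i) (bind' i)} =
          {idx (miss e) false, idx (miss e) true} := by
        ext i
        rw [Set.mem_setOf_eq, hmemD i]
        constructor
        · intro hc
          have hi : idx (miss e) (bind' i) = i := by rw [hc, idx_surj]
          cases hbi : bind' i
          · left; rw [← hi, hbi]
          · right; rw [← hi, hbi]; rfl
        · rintro (rfl | rfl) <;> rw [idx_cind]
      rw [hseteq]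
      refine Set.ncard_pair ?_
      intro hcon
      have := congrArg bind' hcon
      rw [idx_bind, idx_bind] at this
      exact Bool.false_ne_true this

end Phase2main
end CDC

open CDC SimpleGraph in
/-- a bridgeless cubic graph with a spanning subgraph which is a
subdivision of a Kotzig graph has a 6-even-subgraph double cover. -/
theorem stmt_8 {V : Type} [Fintype V] (G : SimpleGraph V) (hcub : IsCubic G)
    (hbr : Bridgeless G) (B : SimpleGraph V) (hBG : B ≤ G)
    (W : Type) (K : SimpleGraph W) (cK : Sym2 W → ZMod 3) (hK : IsKotzig K cK)
    (hsub : IsSubdivisionOf B K) :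
    HasSixDoubleCover G := by
  obtain ⟨cB, hGC⟩ := phase1 hsub ⟨cK, kotzig_GC hK⟩
  exact phase2 G B hBG hcub cB hGC
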